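/- If u is continuous on (0,b], admits a generalized Taylor expansion at 0 with exponent set A(u), and -1 ∉ A(u), then the function U(x) = ∫_x^b u(y) dy admits a generalized Taylor expansion at 0 with exponent set {α + 1 : α ∈ A(u)} ∪ {0}. -/

import Mathlib

set_option maxHeartbeats 1000000


open Set Finset
open MeasureTheory

/-- A continuous function `u` on `(0,b]` admits a generalized Taylor expansion at `0`
with exponent set `A` (a discrete set bounded from below) and coefficients `a`:
for every `N` there is `C_N` with `|u x - ∑_{α ∈ A, α < N} a α x^α| ≤ C_N x^N` on `(0,b]`. -/
def HasGTE (b : ℝ) (u : ℝ → ℂ) (A : Set ℝ) (a : ℝ → ℂ) : Prop :=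
  BddBelow A ∧
  ∀ N : ℕ, ∃ (s : Finset ℝ) (C : ℝ), (↑s : Set ℝ) = A ∩ Set.Iio (N : ℝ) ∧
    ∀ x ∈ Set.Ioc (0 : ℝ) b,
      ‖u x - ∑ α ∈ s, a α * ((x ^ α : ℝ) : ℂ)‖ ≤ C * x ^ (N : ℝ)


lemma mono_contOn (a : ℂ) (α : ℝ) {S : Set ℝ} (hS : ∀ y ∈ S, (0:ℝ) < y) :
    ContinuousOn (fun y : ℝ => a * ((y ^ α : ℝ) : ℂ)) S := by
  intro y hy
  have h1 : ContinuousAt (fun y : ℝ => y ^ α) y :=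
    Real.continuousAt_rpow_const y α (Or.inl (hS y hy).ne')
  exact (continuousAt_const.mul (Complex.continuous_ofReal.continuousAt.comp h1)).continuousWithinAt

lemma monN_int (C : ℝ) (N : ℕ) (p q : ℝ) :
    MeasureTheory.IntegrableOn (fun y : ℝ => C * y ^ (N:ℝ)) (Set.Ioc p q) := by
  have : (fun y : ℝ => C * y ^ (N:ℝ)) = fun y : ℝ => C * y ^ N := by
    funext y; rw [Real.rpow_natCast]
  rw [this]
  exact (continuous_const.mul (continuous_pow N)).integrableOn_Ioc

lemma integrableOn_of_bound {b C : ℝ} {f : ℝ → ℂ}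
    (hf : ContinuousOn f (Set.Ioc 0 b)) (N : ℕ)
    (h : ∀ x ∈ Set.Ioc (0:ℝ) b, ‖f x‖ ≤ C * x ^ (N:ℝ)) :
    MeasureTheory.IntegrableOn f (Set.Ioc 0 b) :=
  (monN_int C N 0 b).mono' (hf.aestronglyMeasurable measurableSet_Ioc)
    ((MeasureTheory.ae_restrict_iff' measurableSet_Ioc).mpr (MeasureTheory.ae_of_all _ h))

lemma tail_bound {b C : ℝ} {f : ℝ → ℂ} (N : ℕ)
    (hR : MeasureTheory.IntegrableOn f (Set.Ioc 0 b))
    (h : ∀ y ∈ Set.Ioc (0:ℝ) b, ‖f y‖ ≤ C * y ^ (N:ℝ))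
    {x : ℝ} (hx0 : 0 < x) (hxb : x ≤ b) :
    ‖∫ y in (0:ℝ)..x, f y‖ ≤ C * x ^ ((N:ℝ)+1) / ((N:ℝ)+1) := by
  have hN1 : (-1:ℝ) < (N:ℝ) := lt_of_lt_of_le (by norm_num) (Nat.cast_nonneg N)
  have hRx : MeasureTheory.IntegrableOn f (Set.Ioc 0 x) :=
    hR.mono_set (Set.Ioc_subset_Ioc_right hxb)
  rw [intervalIntegral.integral_of_le hx0.le]
  calc ‖∫ y in Set.Ioc 0 x, f y‖ ≤ ∫ y in Set.Ioc 0 x, ‖f y‖ :=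
        MeasureTheory.norm_integral_le_integral_norm f
    _ ≤ ∫ y in Set.Ioc 0 x, C * y ^ (N:ℝ) := by
        apply MeasureTheory.setIntegral_mono_on hRx.norm (monN_int C N 0 x) measurableSet_Ioc
        intro y hy; exact h y ⟨hy.1, le_trans hy.2 hxb⟩
    _ = C * x ^ ((N:ℝ)+1) / ((N:ℝ)+1) := by
        rw [← intervalIntegral.integral_of_le hx0.le,
          intervalIntegral.integral_const_mul, integral_rpow (Or.inl hN1),
          Real.zero_rpow (by positivity)]
        ring

lemma decomp {b : ℝ} {u : ℝ → ℂ} (hu : ContinuousOn u (Set.Ioc 0 b))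
    (s : Finset ℝ) (au : ℝ → ℂ) (hα : ∀ α ∈ s, α ≠ -1)
    (hR : IntegrableOn (fun y => u y - ∑ α ∈ s, au α * ((y ^ α : ℝ) : ℂ)) (Set.Ioc 0 b))
    {x : ℝ} (hx : x ∈ Set.Ioc 0 b) :
    (∫ y in x..b, u y) =
      (∫ y in (0:ℝ)..b, (u y - ∑ α ∈ s, au α * ((y ^ α : ℝ) : ℂ)))
      - (∫ y in (0:ℝ)..x, (u y - ∑ α ∈ s, au α * ((y ^ α : ℝ) : ℂ)))
      + ∑ α ∈ s, au α * ((((b ^ (α+1) - x ^ (α+1)) / (α+1)) : ℝ) : ℂ) := by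
  obtain ⟨hx0, hxb⟩ := hx
  have hIccsub : Set.Icc x b ⊆ Set.Ioc 0 b := fun y hy => ⟨lt_of_lt_of_le hx0 hy.1, hy.2⟩
  have huIcc : Set.uIcc x b = Set.Icc x b := Set.uIcc_of_le hxb
  have hR0x : IntervalIntegrable (fun y => u y - ∑ α ∈ s, au α * ((y ^ α : ℝ) : ℂ)) volume 0 x :=
    (intervalIntegrable_iff_integrableOn_Ioc_of_le hx0.le).mpr
      (hR.mono_set (Set.Ioc_subset_Ioc_right hxb))
  have hRxb : IntervalIntegrable (fun y => u y - ∑ α ∈ s, au α * ((y ^ α : ℝ) : ℂ)) volume x b :=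
    (intervalIntegrable_iff_integrableOn_Ioc_of_le hxb).mpr
      (hR.mono_set (Set.Ioc_subset_Ioc_left hx0.le))
  have hPii : ∀ α ∈ s, IntervalIntegrable (fun y => au α * ((y ^ α : ℝ) : ℂ)) volume x b := by
    intro α _
    exact (mono_contOn (au α) α (fun y hy => lt_of_lt_of_le hx0 ((huIcc ▸ hy).1))).intervalIntegrable
  have hPiisum : IntervalIntegrable (fun y => ∑ α ∈ s, au α * ((y ^ α : ℝ) : ℂ)) volume x b := by
    have he : (fun y => ∑ α ∈ s, au α * ((y ^ α : ℝ) : ℂ))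
        = ∑ α ∈ s, fun y => au α * ((y ^ α : ℝ) : ℂ) := by
      funext y; simp
    rw [he]; exact IntervalIntegrable.sum s hPii
  have huxb : IntervalIntegrable u volume x b :=
    (hu.mono (huIcc ▸ hIccsub : Set.uIcc x b ⊆ Set.Ioc 0 b)).intervalIntegrable
  have heach : ∀ α ∈ s, (∫ y in x..b, au α * ((y ^ α : ℝ) : ℂ))
      = au α * ((((b ^ (α+1) - x ^ (α+1)) / (α+1)) : ℝ) : ℂ) := by
    intro α hαs
    have h0 : (0:ℝ) ∉ Set.uIcc x b := by
      rw [huIcc]; intro h; exact absurd h.1 (not_le.mpr hx0)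
    rw [intervalIntegral.integral_const_mul, intervalIntegral.integral_ofReal,
      integral_rpow (Or.inr ⟨hα α hαs, h0⟩)]
  have hadj := intervalIntegral.integral_add_adjacent_intervals hR0x hRxb
  have hsplit : (∫ y in x..b, u y)
      = (∫ y in x..b, (u y - ∑ α ∈ s, au α * ((y ^ α : ℝ) : ℂ)))
        + ∫ y in x..b, ∑ α ∈ s, au α * ((y ^ α : ℝ) : ℂ) := by
    rw [← intervalIntegral.integral_add hRxb hPiisum]
    congr 1; funext y; ring
  rw [hsplit, intervalIntegral.integral_finset_sum hPii, Finset.sum_congr rfl heach]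
  rw [← hadj]; ring

open MeasureTheory in
/-- If `u` has a generalized Taylor expansion with `-1 ∉ A(u)`, then
`U(x) = ∫_x^b u(y) dy` has a generalized Taylor expansion with exponent set
`{α + 1 : α ∈ A(u)} ∪ {0}`. -/
theorem gte_integral (b : ℝ) (hb : 0 < b) (u : ℝ → ℂ)
    (hu : ContinuousOn u (Set.Ioc 0 b))
    (Au : Set ℝ) (au : ℝ → ℂ) (hgu : HasGTE b u Au au) (hm1 : (-1 : ℝ) ∉ Au) :
    ∃ a : ℝ → ℂ,
      HasGTE b (fun x => ∫ y in x..b, u y) (((fun α => α + 1) '' Au) ∪ {0}) a := by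
  classical
  obtain ⟨hbdd, hN⟩ := hgu
  choose s C hs hC using hN
  have hmem : ∀ N : ℕ, ∀ α ∈ s N, α ∈ Au ∧ α < (N:ℝ) := by
    intro N α hα
    have h1 : α ∈ (↑(s N) : Set ℝ) := hα
    rw [hs N] at h1
    exact ⟨h1.1, h1.2⟩
  have hne : ∀ N : ℕ, ∀ α ∈ s N, α ≠ -1 := fun N α hα h => hm1 (h ▸ (hmem N α hα).1)
  have hC' : ∀ N : ℕ, ∀ x ∈ Set.Ioc (0:ℝ) b,
      ‖u x - ∑ α ∈ s N, au α * ((x ^ α : ℝ) : ℂ)‖ ≤ C N * x ^ (N:ℝ) := by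
    intro N x hx; exact hC N x hx
  have hRcont : ∀ N : ℕ,
      ContinuousOn (fun y => u y - ∑ α ∈ s N, au α * ((y ^ α : ℝ) : ℂ)) (Set.Ioc 0 b) := by
    intro N
    exact hu.sub (continuousOn_finset_sum (s N)
      (fun α _ => mono_contOn (au α) α (fun y hy => hy.1)))
  have hRint : ∀ N : ℕ,
      IntegrableOn (fun y => u y - ∑ α ∈ s N, au α * ((y ^ α : ℝ) : ℂ)) (Set.Ioc 0 b) :=
    fun N => integrableOn_of_bound (hRcont N) N (hC' N)
  have hC0 : ∀ N : ℕ, 0 ≤ C N := by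
    intro N
    have h1 := hC' N b ⟨hb, le_refl b⟩
    have h2 : (0:ℝ) < b ^ (N:ℝ) := Real.rpow_pos_of_pos hb _
    nlinarith [norm_nonneg (u b - ∑ α ∈ s N, au α * ((b ^ α : ℝ) : ℂ))]
  set c : ℂ := (∫ y in (0:ℝ)..b, (u y - ∑ α ∈ s 0, au α * ((y ^ α : ℝ) : ℂ)))
      + ∑ α ∈ s 0, au α * (((b ^ (α+1) / (α+1)) : ℝ) : ℂ) with hcdef
  have hcN : ∀ N : ℕ, c = (∫ y in (0:ℝ)..b, (u y - ∑ α ∈ s N, au α * ((y ^ α : ℝ) : ℂ)))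
      + ∑ α ∈ s N, au α * (((b ^ (α+1) / (α+1)) : ℝ) : ℂ) := by
    intro N
    have hsub : s 0 ⊆ s N := by
      rw [← Finset.coe_subset, hs 0, hs N]
      exact Set.inter_subset_inter_right _ (Set.Iio_subset_Iio (by exact_mod_cast Nat.zero_le N))
    have hpos : ∀ α ∈ s N \ s 0, (0:ℝ) ≤ α := by
      intro α hα
      rw [Finset.mem_sdiff] at hα
      by_contra hlt
      apply hα.2
      have h1 : α ∈ (↑(s 0) : Set ℝ) := by
        rw [hs 0]; exact ⟨(hmem N α hα.1).1, by simp only [Set.mem_Iio]; push_cast; linarith⟩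
      exact h1
    have hint : ∀ α ∈ s N \ s 0,
        IntervalIntegrable (fun y => au α * ((y ^ α : ℝ) : ℂ)) volume 0 b := by
      intro α hα
      have h1 : Continuous fun y : ℝ => au α * ((y ^ α : ℝ) : ℂ) := by
        rw [continuous_iff_continuousAt]
        intro y
        exact continuousAt_const.mul (Complex.continuous_ofReal.continuousAt.comp
          (Real.continuousAt_rpow_const y α (Or.inr (hpos α hα))))
      exact h1.intervalIntegrable 0 b
    have heach : ∀ α ∈ s N \ s 0, (∫ y in (0:ℝ)..b, au α * ((y ^ α : ℝ) : ℂ))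
        = au α * (((b ^ (α+1) / (α+1)) : ℝ) : ℂ) := by
      intro α hα
      have hα1 : (-1:ℝ) < α := lt_of_lt_of_le (by norm_num) (hpos α hα)
      rw [intervalIntegral.integral_const_mul, intervalIntegral.integral_ofReal,
        integral_rpow (Or.inl hα1), Real.zero_rpow (by linarith), sub_zero]
    have hii0 : IntervalIntegrable (fun y => u y - ∑ α ∈ s 0, au α * ((y ^ α : ℝ) : ℂ)) volume 0 b :=
      (intervalIntegrable_iff_integrableOn_Ioc_of_le hb.le).mpr (hRint 0)
    have hiiN : IntervalIntegrable (fun y => u y - ∑ α ∈ s N, au α * ((y ^ α : ℝ) : ℂ)) volume 0 b :=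
      (intervalIntegrable_iff_integrableOn_Ioc_of_le hb.le).mpr (hRint N)
    have hkey : (∫ y in (0:ℝ)..b, (u y - ∑ α ∈ s 0, au α * ((y ^ α : ℝ) : ℂ)))
        - (∫ y in (0:ℝ)..b, (u y - ∑ α ∈ s N, au α * ((y ^ α : ℝ) : ℂ)))
        = ∑ α ∈ s N \ s 0, au α * (((b ^ (α+1) / (α+1)) : ℝ) : ℂ) := by
      rw [← intervalIntegral.integral_sub hii0 hiiN]
      have hdiff : (fun y => (u y - ∑ α ∈ s 0, au α * ((y ^ α : ℝ) : ℂ))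
          - (u y - ∑ α ∈ s N, au α * ((y ^ α : ℝ) : ℂ)))
          = fun y => ∑ α ∈ s N \ s 0, au α * ((y ^ α : ℝ) : ℂ) := by
        funext y
        have h := Finset.sum_sdiff (f := fun α => au α * ((y ^ α : ℝ) : ℂ)) hsub
        linear_combination - h
      rw [hdiff, intervalIntegral.integral_finset_sum hint, Finset.sum_congr rfl heach]
    have hs2 := Finset.sum_sdiff (f := fun α => au α * (((b ^ (α+1) / (α+1)) : ℝ) : ℂ)) hsub
    rw [hcdef]
    linear_combination hkey + hs2
  set a : ℝ → ℂ := fun β => if β = 0 then c else -au (β - 1) / ((β : ℝ) : ℂ) with hadef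
  refine ⟨a, ?_, ?_⟩
  · apply BddBelow.union
    · obtain ⟨m, hm⟩ := hbdd
      exact ⟨m + 1, fun β hβ => by obtain ⟨α, hα, rfl⟩ := hβ; exact add_le_add_left (hm hα) 1⟩
    · exact bddBelow_singleton
  intro N
  set t : Finset ℝ := (s N).filter (fun α => α < (N:ℝ) - 1) with htdef
  have htmem : ∀ α ∈ t, α ∈ Au ∧ α < (N:ℝ) - 1 := by
    intro α hα
    rw [htdef, Finset.mem_filter] at hα
    exact ⟨(hmem N α hα.1).1, hα.2⟩
  have htsub : t ⊆ s N := Finset.filter_subset _ _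
  have himg : ∀ β : ℝ, β ∈ Finset.image (fun α => α + 1) t ↔
      ∃ α, α ∈ Au ∧ α < (N:ℝ) - 1 ∧ α + 1 = β := by
    intro β
    rw [Finset.mem_image]
    constructor
    · rintro ⟨α, hα, rfl⟩
      exact ⟨α, (htmem α hα).1, (htmem α hα).2, rfl⟩
    · rintro ⟨α, h1, h2, rfl⟩
      refine ⟨α, ?_, rfl⟩
      rw [htdef, Finset.mem_filter]
      refine ⟨?_, h2⟩
      have h3 : α ∈ (↑(s N) : Set ℝ) := by
        rw [hs N]; exact ⟨h1, by simp only [Set.mem_Iio]; linarith⟩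
      exact h3
  have h0notmem : (0:ℝ) ∉ Finset.image (fun α => α + 1) t := by
    rw [himg 0]
    rintro ⟨α, h1, _, h3⟩
    have : α = -1 := by linarith
    exact hm1 (this ▸ h1)
  refine ⟨(if N = 0 then Finset.image (fun α => α + 1) t
      else insert (0:ℝ) (Finset.image (fun α => α + 1) t)),
    (if N = 0 then ‖c‖ else 0) + C N * b
      + (∑ α ∈ s N, ‖au α / (((α+1 : ℝ)) : ℂ)‖) * max 1 b, ?_, ?_⟩
  · -- coe equality
    rcases eq_or_ne N 0 with h0 | h0
    · rw [if_pos h0]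
      have hN0 : ((N:ℝ)) = 0 := by rw [h0]; norm_num
      ext β
      simp only [Finset.coe_image, Set.mem_image, Finset.mem_coe, Set.mem_inter_iff,
        Set.mem_union, Set.mem_Iio, Set.mem_singleton_iff]
      constructor
      · rintro ⟨α, hα, rfl⟩
        obtain ⟨h1, h2⟩ := htmem α hα
        exact ⟨Or.inl ⟨α, h1, rfl⟩, by rw [hN0]; linarith⟩
      · rintro ⟨hor, hlt⟩
        rw [hN0] at hlt
        rcases hor with ⟨α, h1, rfl⟩ | rfl
        · have hlt' : α + 1 < 0 := hlt
          have hmt : α ∈ t := by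
            rw [htdef, Finset.mem_filter]
            refine ⟨?_, by rw [hN0]; linarith⟩
            have h3 : α ∈ (↑(s N) : Set ℝ) := by
              rw [hs N]; exact ⟨h1, by simp only [Set.mem_Iio]; rw [hN0]; linarith⟩
            exact h3
          exact ⟨α, hmt, rfl⟩
        · linarith
    · rw [if_neg h0]
      have hNpos : (0:ℝ) < N := by
        have := Nat.pos_of_ne_zero h0; exact_mod_cast this
      ext β
      simp only [Finset.coe_insert, Set.mem_insert_iff, Finset.mem_coe, Set.mem_inter_iff,
        Set.mem_union, Set.mem_Iio, Set.mem_singleton_iff]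
      constructor
      · rintro (rfl | hβ)
        · exact ⟨Or.inr rfl, hNpos⟩
        · obtain ⟨α, h1, h2, rfl⟩ := (himg _).mp hβ
          exact ⟨Or.inl ⟨α, h1, rfl⟩, by linarith⟩
      · rintro ⟨hor, hlt⟩
        rcases hor with ⟨α, h1, rfl⟩ | rfl
        · right
          have hlt' : α + 1 < (N:ℝ) := hlt
          exact (himg _).mpr ⟨α, h1, by linarith, rfl⟩
        · left; rfl
  · -- the bound
    intro x hx
    obtain ⟨hx0, hxb⟩ := hx
    have hinj : ∀ p ∈ t, ∀ q ∈ t, p + 1 = q + 1 → p = q := fun p _ q _ h => by linarith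
    have hsum_img : ∑ β ∈ Finset.image (fun α => α + 1) t, a β * ((x ^ β : ℝ) : ℂ)
        = -∑ α ∈ t, au α * (((x ^ (α+1) / (α+1)) : ℝ) : ℂ) := by
      rw [Finset.sum_image hinj, ← Finset.sum_neg_distrib]
      apply Finset.sum_congr rfl
      intro α hα
      have hα0 : α + 1 ≠ 0 := by
        intro h
        have : α = -1 := by linarith
        exact hm1 (this ▸ (htmem α hα).1)
      rw [hadef]
      simp only [if_neg hα0, add_sub_cancel_right]
      push_cast
      ring
    have hsum : ∑ β ∈ (if N = 0 then Finset.image (fun α => α + 1) t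
          else insert (0:ℝ) (Finset.image (fun α => α + 1) t)), a β * ((x ^ β : ℝ) : ℂ)
        = (if N = 0 then 0 else c) - ∑ α ∈ t, au α * (((x ^ (α+1) / (α+1)) : ℝ) : ℂ) := by
      rcases eq_or_ne N 0 with h0 | h0
      · rw [if_pos h0, if_pos h0, hsum_img]; ring
      · rw [if_neg h0, if_neg h0, Finset.sum_insert h0notmem, hsum_img]
        have ha0 : a 0 = c := by rw [hadef]; simp
        rw [ha0, Real.rpow_zero]
        push_cast
        ring
    have hdec := decomp hu (s N) au (hne N) (hRint N) ⟨hx0, hxb⟩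
    have hsplitsum : ∑ α ∈ s N, au α * ((((b ^ (α+1) - x ^ (α+1)) / (α+1)) : ℝ) : ℂ)
        = ∑ α ∈ s N, au α * (((b ^ (α+1) / (α+1)) : ℝ) : ℂ)
          - ∑ α ∈ s N, au α * (((x ^ (α+1) / (α+1)) : ℝ) : ℂ) := by
      rw [← Finset.sum_sub_distrib]
      apply Finset.sum_congr rfl
      intro α _
      push_cast
      ring
    have hU : (∫ y in x..b, u y)
        = c - (∫ y in (0:ℝ)..x, (u y - ∑ α ∈ s N, au α * ((y ^ α : ℝ) : ℂ)))
          - ∑ α ∈ s N, au α * (((x ^ (α+1) / (α+1)) : ℝ) : ℂ) := by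
      rw [hdec, hsplitsum, hcN N]; ring
    have hts := Finset.sum_sdiff (f := fun α => au α * (((x ^ (α+1) / (α+1)) : ℝ) : ℂ)) htsub
    have hfinal : (∫ y in x..b, u y) - ∑ β ∈ (if N = 0 then Finset.image (fun α => α + 1) t
          else insert (0:ℝ) (Finset.image (fun α => α + 1) t)), a β * ((x ^ β : ℝ) : ℂ)
        = (if N = 0 then c else 0)
          - (∫ y in (0:ℝ)..x, (u y - ∑ α ∈ s N, au α * ((y ^ α : ℝ) : ℂ)))
          - ∑ α ∈ s N \ t, au α * (((x ^ (α+1) / (α+1)) : ℝ) : ℂ) := by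
      rw [hU, hsum]
      rcases eq_or_ne N 0 with h0 | h0
      · rw [if_pos h0, if_pos h0]; linear_combination hts
      · rw [if_neg h0, if_neg h0]; linear_combination hts
    -- now bound the three pieces
    have hxNpos : (0:ℝ) < x ^ (N:ℝ) := Real.rpow_pos_of_pos hx0 _
    have hA : ‖(if N = 0 then c else 0)‖ ≤ (if N = 0 then ‖c‖ else 0) * x ^ (N:ℝ) := by
      rcases eq_or_ne N 0 with h0 | h0
      · simp only [if_pos h0, h0]
        push_cast
        rw [Real.rpow_zero, mul_one]
      · simp only [if_neg h0, norm_zero, zero_mul, le_refl]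
    have hB : ‖∫ y in (0:ℝ)..x, (u y - ∑ α ∈ s N, au α * ((y ^ α : ℝ) : ℂ))‖
        ≤ C N * b * x ^ (N:ℝ) := by
      have h1 := tail_bound N (hRint N) (hC' N) hx0 hxb
      have h2 : x ^ ((N:ℝ)+1) = x ^ (N:ℝ) * x := by
        rw [Real.rpow_add hx0, Real.rpow_one]
      have h4 : (1:ℝ) ≤ (N:ℝ) + 1 := by
        have := Nat.cast_nonneg (α := ℝ) N; linarith
      refine le_trans h1 ?_
      rw [h2]
      have h5 : 0 ≤ C N * (x ^ (N:ℝ) * x) :=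
        mul_nonneg (hC0 N) (by positivity)
      calc C N * (x ^ (N:ℝ) * x) / ((N:ℝ)+1) ≤ C N * (x ^ (N:ℝ) * x) := by
            apply div_le_self h5 h4
        _ ≤ C N * b * x ^ (N:ℝ) := by nlinarith [hC0 N, hxNpos]
    have hD : ‖∑ α ∈ s N \ t, au α * (((x ^ (α+1) / (α+1)) : ℝ) : ℂ)‖
        ≤ (∑ α ∈ s N, ‖au α / (((α+1 : ℝ)) : ℂ)‖) * max 1 b * x ^ (N:ℝ) := by
      have hterm : ∀ α ∈ s N \ t, ‖au α * (((x ^ (α+1) / (α+1)) : ℝ) : ℂ)‖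
          ≤ ‖au α / (((α+1 : ℝ)) : ℂ)‖ * (max 1 b * x ^ (N:ℝ)) := by
        intro α hα
        obtain ⟨hαs, hαt⟩ := Finset.mem_sdiff.mp hα
        have hge : (N:ℝ) - 1 ≤ α := by
          by_contra hcon
          exact hαt (by rw [htdef, Finset.mem_filter]; exact ⟨hαs, by linarith⟩)
        have hlt : α < (N:ℝ) := (hmem N α hαs).2
        have heq : au α * (((x ^ (α+1) / (α+1)) : ℝ) : ℂ)
            = (au α / (((α+1 : ℝ)) : ℂ)) * ((x ^ (α+1) : ℝ) : ℂ) := by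
          push_cast; ring
        rw [heq, norm_mul, Complex.norm_real, Real.norm_of_nonneg
          (Real.rpow_nonneg hx0.le _)]
        apply mul_le_mul_of_nonneg_left _ (norm_nonneg _)
        have hxsplit : x ^ (α+1) = x ^ (N:ℝ) * x ^ (α + 1 - (N:ℝ)) := by
          rw [← Real.rpow_add hx0]; ring_nf
        rw [hxsplit]
        rw [mul_comm (max 1 b) (x ^ (N:ℝ))]
        apply mul_le_mul_of_nonneg_left _ hxNpos.le
        have he0 : (0:ℝ) ≤ α + 1 - (N:ℝ) := by linarith
        have he1 : α + 1 - (N:ℝ) ≤ 1 := by linarith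
        rcases le_or_gt x 1 with hx1 | hx1
        · exact le_trans (Real.rpow_le_one hx0.le hx1 he0) (le_max_left _ _)
        · calc x ^ (α + 1 - (N:ℝ)) ≤ x ^ (1:ℝ) :=
              Real.rpow_le_rpow_of_exponent_le hx1.le he1
            _ = x := Real.rpow_one x
            _ ≤ b := hxb
            _ ≤ max 1 b := le_max_right _ _
      calc ‖∑ α ∈ s N \ t, au α * (((x ^ (α+1) / (α+1)) : ℝ) : ℂ)‖
          ≤ ∑ α ∈ s N \ t, ‖au α * (((x ^ (α+1) / (α+1)) : ℝ) : ℂ)‖ := norm_sum_le _ _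
        _ ≤ ∑ α ∈ s N \ t, ‖au α / (((α+1 : ℝ)) : ℂ)‖ * (max 1 b * x ^ (N:ℝ)) :=
            Finset.sum_le_sum hterm
        _ ≤ ∑ α ∈ s N, ‖au α / (((α+1 : ℝ)) : ℂ)‖ * (max 1 b * x ^ (N:ℝ)) := by
            apply Finset.sum_le_sum_of_subset_of_nonneg (Finset.sdiff_subset)
            intro α _ _
            positivity
        _ = (∑ α ∈ s N, ‖au α / (((α+1 : ℝ)) : ℂ)‖) * max 1 b * x ^ (N:ℝ) := by
            rw [← Finset.sum_mul]; ring
    calc ‖(∫ y in x..b, u y) - ∑ β ∈ (if N = 0 then Finset.image (fun α => α + 1) t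
            else insert (0:ℝ) (Finset.image (fun α => α + 1) t)), a β * ((x ^ β : ℝ) : ℂ)‖
        = ‖(if N = 0 then c else 0)
            - (∫ y in (0:ℝ)..x, (u y - ∑ α ∈ s N, au α * ((y ^ α : ℝ) : ℂ)))
            - ∑ α ∈ s N \ t, au α * (((x ^ (α+1) / (α+1)) : ℝ) : ℂ)‖ := by rw [hfinal]
      _ ≤ ‖(if N = 0 then c else 0)
            - (∫ y in (0:ℝ)..x, (u y - ∑ α ∈ s N, au α * ((y ^ α : ℝ) : ℂ)))‖
            + ‖∑ α ∈ s N \ t, au α * (((x ^ (α+1) / (α+1)) : ℝ) : ℂ)‖ := norm_sub_le _ _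
      _ ≤ ‖(if N = 0 then c else 0)‖
            + ‖∫ y in (0:ℝ)..x, (u y - ∑ α ∈ s N, au α * ((y ^ α : ℝ) : ℂ))‖
            + ‖∑ α ∈ s N \ t, au α * (((x ^ (α+1) / (α+1)) : ℝ) : ℂ)‖ :=
            add_le_add_left (norm_sub_le _ _) _
      _ ≤ (if N = 0 then ‖c‖ else 0) * x ^ (N:ℝ) + C N * b * x ^ (N:ℝ)
            + (∑ α ∈ s N, ‖au α / (((α+1 : ℝ)) : ℂ)‖) * max 1 b * x ^ (N:ℝ) :=
            add_le_add (add_le_add hA hB) hD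
      _ = ((if N = 0 then ‖c‖ else 0) + C N * b
            + (∑ α ∈ s N, ‖au α / (((α+1 : ℝ)) : ℂ)‖) * max 1 b) * x ^ (N:ℝ) := by ring
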